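/- Let A be an MV-algebra and s : A → [0,1] a state. Then s is extremal in the convex set of states if and only if s is a state-morphism, i.e., s(a ⊕ b) = min{ s(a) + s(b), 1 } for all a, b ∈ A. -/

import Mathlib

/-- An MV-algebra `(A; ⊕, *, 0)`. -/
class MValgebra (A : Type*) where
  oplus : A → A → A
  star : A → A
  zero : A
  oplus_comm : ∀ x y, oplus x y = oplus y x
  oplus_assoc : ∀ x y z, oplus (oplus x y) z = oplus x (oplus y z)
  oplus_zero : ∀ x, oplus x zero = x
  star_star : ∀ x, star (star x) = x
  oplus_one : ∀ x, oplus x (star zero) = star zero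
  lukasiewicz : ∀ x y, oplus x (star (oplus x (star y))) =
    oplus y (star (oplus y (star x)))

namespace MValgebra

variable {A : Type*} [MValgebra A]

/-- `x ⊙ y := (x* ⊕ y*)*`. -/
def odot (x y : A) : A := star (oplus (star x) (star y))

/-- `1 := 0*`. -/
def one : A := star zero

/-- The natural order: `x ≤ y` iff `x* ⊕ y = 1`. -/
def mvle (x y : A) : Prop := oplus (star x) y = one

/-- A state-operator (internal state) on an MV-algebra. -/
def IsStateOperator (τ : A → A) : Prop :=
  τ zero = zero ∧
  (∀ x, τ (star x) = star (τ x)) ∧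
  (∀ x y, τ (oplus x y) = oplus (τ x) (τ (odot y (star (odot x y))))) ∧
  (∀ x y, τ (oplus (τ x) (τ y)) = oplus (τ x) (τ y))

end MValgebra

namespace MValgebra

variable {A : Type*} [MValgebra A]

/-- A state on an MV-algebra: a `[0,1]`-valued map with `s(1)=1` that is additive
on pairs with `a ⊙ b = 0`. -/
def IsState (s : A → ℝ) : Prop :=
  (∀ a, s a ∈ Set.Icc (0 : ℝ) 1) ∧ s one = 1 ∧
  ∀ a b, odot a b = zero → s (oplus a b) = s a + s b

/-- An extremal state: `s = λ s₁ + (1-λ) s₂` with `0 < λ < 1` forces `s₁ = s₂ = s`. -/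
def IsExtremalState (s : A → ℝ) : Prop :=
  IsState s ∧
  ∀ s₁ s₂ : A → ℝ, IsState s₁ → IsState s₂ → ∀ l : ℝ, 0 < l → l < 1 →
    (∀ a, s a = l * s₁ a + (1 - l) * s₂ a) →
    ((∀ a, s₁ a = s a) ∧ (∀ a, s₂ a = s a))

end MValgebra

namespace MValgebra

open Filter Topology

variable {A : Type*} [MValgebra A]

instance : Std.Associative (oplus (A := A)) := ⟨oplus_assoc⟩
instance : Std.Commutative (oplus (A := A)) := ⟨oplus_comm⟩

lemma star_one : star (one : A) = zero := star_star zero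
lemma oplus_one' (x : A) : oplus x one = one := oplus_one x
lemma one_oplus (x : A) : oplus one x = one := by rw [oplus_comm]; exact oplus_one' x
lemma zero_oplus (x : A) : oplus zero x = x := by rw [oplus_comm]; exact oplus_zero x
lemma oplus_star_self (x : A) : oplus x (star x) = one := by
  have h := lukasiewicz x (one : A)
  rw [star_one, oplus_zero] at h
  rw [h, oplus_comm one (star x), oplus_one', star_one, oplus_zero]
lemma star_oplus_self (x : A) : oplus (star x) x = one := by
  rw [oplus_comm]; exact oplus_star_self x
lemma odot_star_self (x : A) : odot x (star x) = zero := by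
  show star (oplus (star x) (star (star x))) = zero
  rw [star_star, star_oplus_self]; exact star_star zero
lemma star_odot (x y : A) : star (odot x y) = oplus (star x) (star y) := star_star _
lemma odot_star_star (x y : A) : odot (star x) (star y) = star (oplus x y) := by
  show star (oplus (star (star x)) (star (star y))) = star (oplus x y)
  rw [star_star, star_star]
lemma odot_comm (x y : A) : odot x y = odot y x := by
  show star (oplus (star x) (star y)) = star (oplus (star y) (star x))
  rw [oplus_comm]
lemma odot_one (x : A) : odot x one = x := by
  show star (oplus (star x) (star one)) = x
  rw [star_one, oplus_zero, star_star]
lemma one_odot (x : A) : odot one x = x := by rw [odot_comm]; exact odot_one x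
lemma odot_zero (x : A) : odot x zero = zero := by
  show star (oplus (star x) (star zero)) = zero
  show star (oplus (star x) one) = zero
  rw [oplus_one', star_one]
lemma mvle_refl (x : A) : mvle x x := star_oplus_self x
lemma mvle_one (x : A) : mvle x one := oplus_one' (star x)
lemma mvle_zero (x : A) : mvle zero x := by
  show oplus (star zero) x = one
  show oplus one x = one
  exact one_oplus x
lemma mvle_oplus (x t : A) : mvle x (oplus x t) := by
  show oplus (star x) (oplus x t) = one
  rw [← oplus_assoc, star_oplus_self, one_oplus]
lemma mvle_oplus' (x t : A) : mvle t (oplus x t) := by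
  rw [oplus_comm]; exact mvle_oplus t x
lemma le_elim {x y : A} (h : mvle x y) : oplus x (star (oplus x (star y))) = y := by
  have hl := lukasiewicz x y
  have h' : oplus y (star x) = one := by rw [oplus_comm]; exact h
  rw [h', star_one, oplus_zero] at hl
  exact hl
lemma mvle_iff_exists {x y : A} : mvle x y ↔ ∃ t, oplus x t = y := by
  constructor
  · intro h; exact ⟨_, le_elim h⟩
  · rintro ⟨t, rfl⟩; exact mvle_oplus x t
lemma mvle_trans {x y z : A} (h1 : mvle x y) (h2 : mvle y z) : mvle x z := by
  obtain ⟨t, rfl⟩ := mvle_iff_exists.1 h1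
  obtain ⟨u, rfl⟩ := mvle_iff_exists.1 h2
  rw [oplus_assoc]; exact mvle_oplus x _
lemma mvle_zero_eq {x : A} (h : mvle x zero) : x = zero := by
  have h' : oplus (star x) zero = one := h
  rw [oplus_zero] at h'
  calc x = star (star x) := (star_star x).symm
  _ = star one := by rw [h']
  _ = zero := star_one
lemma oplus_mono_right {y y' : A} (x : A) (h : mvle y y') : mvle (oplus x y) (oplus x y') := by
  obtain ⟨t, rfl⟩ := mvle_iff_exists.1 h
  rw [← oplus_assoc]; exact mvle_oplus _ t
lemma oplus_mono_left {y y' : A} (x : A) (h : mvle y y') : mvle (oplus y x) (oplus y' x) := by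
  rw [oplus_comm y x, oplus_comm y' x]; exact oplus_mono_right x h
lemma star_mono {x y : A} (h : mvle x y) : mvle (star y) (star x) := by
  show oplus (star (star y)) (star x) = one
  rw [star_star, oplus_comm]; exact h
lemma odot_mono_right {y y' : A} (x : A) (h : mvle y y') : mvle (odot x y) (odot x y') := by
  exact star_mono (oplus_mono_right (star x) (star_mono h))
lemma odot_mono_left {y y' : A} (x : A) (h : mvle y y') : mvle (odot y x) (odot y' x) := by
  rw [odot_comm y x, odot_comm y' x]; exact odot_mono_right x h
lemma odot_le_left (x y : A) : mvle (odot x y) x := by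
  show oplus (star (odot x y)) x = one
  rw [star_odot]
  rw [show oplus (oplus (star x) (star y)) x = oplus (oplus (star x) x) (star y) from by ac_rfl,
    star_oplus_self, one_oplus]
lemma odot_le_right (x y : A) : mvle (odot x y) y := by
  rw [odot_comm]; exact odot_le_left y x
lemma step1 (a b : A) : oplus (odot a b) (star b) = oplus a (star (oplus a b)) := by
  show oplus (star (oplus (star a) (star b))) (star b) = _
  rw [oplus_comm (star (oplus (star a) (star b))) (star b),
    oplus_comm (star a) (star b)]
  have h := lukasiewicz (star b) a
  rw [star_star b] at h
  exact h
lemma ld (a b e : A) : mvle (odot a (oplus b e)) (oplus b (odot a e)) := by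
  show oplus (star (odot a (oplus b e))) (oplus b (odot a e)) = one
  rw [star_odot]
  have key : oplus b (star (oplus b e)) = oplus (star e) (odot e b) := by
    have h := lukasiewicz b (star e)
    rw [star_star e] at h
    exact h
  rw [show oplus (oplus (star a) (star (oplus b e))) (oplus b (odot a e)) =
      oplus (oplus b (star (oplus b e))) (oplus (star a) (odot a e)) from by ac_rfl, key]
  show oplus (oplus (star e) (odot e b)) (oplus (star a) (star (oplus (star a) (star e)))) = one
  rw [show oplus (oplus (star e) (odot e b)) (oplus (star a) (star (oplus (star a) (star e)))) =
      oplus (oplus (oplus (star a) (star e)) (star (oplus (star a) (star e)))) (odot e b) from by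
        ac_rfl,
    oplus_star_self, one_oplus]
lemma res {t x : A} (h : odot t (star x) = zero) : mvle t x := by
  have h1 := ld t x (star x)
  rw [oplus_star_self, odot_one, h, oplus_zero] at h1
  exact h1
lemma K (x y : A) : oplus (oplus x y) (odot x y) = oplus x y := by
  have hstarc : star (odot x y) = oplus (star x) (star y) := star_odot x y
  have hxc : oplus x (star (odot x y)) = one := by
    rw [hstarc, ← oplus_assoc, oplus_star_self, one_oplus]
  have step1x : oplus (odot x (star (odot x y))) (odot x y) = x := by
    have h := step1 x (star (odot x y))
    rw [star_star, hxc, star_one, oplus_zero] at h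
    exact h
  have m_eq : odot (oplus x y) (star y) = odot x (star (odot x y)) := by
    show star (oplus (star (oplus x y)) (star (star y))) =
      star (oplus (star x) (star (star (odot x y))))
    rw [star_star y, star_star]
    have h := lukasiewicz y (star x)
    rw [star_star x] at h
    rw [oplus_comm (star (oplus x y)) y, oplus_comm x y]
    rw [h]
    rfl
  have u_eq : oplus (odot (oplus x y) (star y)) y = oplus x y := by
    have h := step1 (oplus x y) (star y)
    rw [star_star] at h
    rw [show oplus (oplus x y) (star y) = oplus x (oplus y (star y)) from by ac_rfl,
      oplus_star_self, oplus_one', star_one, oplus_zero] at h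
    exact h
  calc oplus (oplus x y) (odot x y)
      = oplus (oplus (odot (oplus x y) (star y)) y) (odot x y) := by rw [u_eq]
    _ = oplus y (oplus (odot (oplus x y) (star y)) (odot x y)) := by ac_rfl
    _ = oplus y (oplus (odot x (star (odot x y))) (odot x y)) := by rw [m_eq]
    _ = oplus y x := by rw [step1x]
    _ = oplus x y := oplus_comm y x
lemma L6 (a b c e : A) : mvle (odot (oplus a c) (oplus b e)) (oplus (odot a b) (oplus c e)) := by
  have t1 : mvle (odot (oplus a c) (oplus b e)) (oplus e (odot (oplus a c) b)) := by
    have := ld (oplus a c) e b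
    rwa [oplus_comm b e]
  have t2 : mvle (odot (oplus a c) b) (oplus c (odot b a)) := by
    have := ld b c a
    rwa [oplus_comm c a, ← odot_comm (oplus a c) b] at this
  have t3 : mvle (oplus e (odot (oplus a c) b)) (oplus e (oplus c (odot b a))) :=
    oplus_mono_right e t2
  refine mvle_trans (mvle_trans t1 t3) ?_
  rw [odot_comm b a,
    show oplus e (oplus c (odot a b)) = oplus (odot a b) (oplus c e) from by ac_rfl]
  exact mvle_refl _

-- ============ state lemmas ============
section States
variable {s : A → ℝ} (hs : IsState s)

include hs

lemma s_nonneg (a : A) : 0 ≤ s a := (hs.1 a).1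
lemma s_le_one (a : A) : s a ≤ 1 := (hs.1 a).2
lemma s_one : s (one : A) = 1 := hs.2.1

lemma s_zero : s (zero : A) = 0 := by
  have h := hs.2.2 zero zero (by rw [odot_zero])
  rw [oplus_zero] at h
  linarith

lemma s_star (x : A) : s (star x) = 1 - s x := by
  have h := hs.2.2 x (star x) (odot_star_self x)
  rw [oplus_star_self, s_one hs] at h
  linarith

lemma s_mono {x y : A} (h : mvle x y) : s x ≤ s y := by
  have hd := le_elim h
  have hz : odot x (star (oplus x (star y))) = zero := by
    show star (oplus (star x) (star (star (oplus x (star y))))) = zero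
    rw [star_star]
    rw [show oplus (star x) (oplus x (star y)) = oplus (oplus (star x) x) (star y) from by ac_rfl,
      star_oplus_self, one_oplus, star_one]
  have := hs.2.2 x _ hz
  rw [hd] at this
  have := s_nonneg hs (star (oplus x (star y)))
  linarith

/-- the valuation identity -/
lemma s_val (x y : A) : s (oplus x y) + s (odot x y) = s x + s y := by
  set w := star (oplus x (star (oplus x y))) with hw
  have hd : oplus x w = oplus x y := by
    have h := lukasiewicz x (oplus x y)
    rw [show oplus (oplus x y) (star x) = oplus (oplus x (star x)) y from by ac_rfl,
      oplus_star_self, one_oplus, star_one, oplus_zero] at h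
    exact h
  have hc : odot x w = zero := by
    show star (oplus (star x) (star w)) = zero
    rw [hw, star_star]
    rw [show oplus (star x) (oplus x (star (oplus x y))) =
      oplus (oplus (star x) x) (star (oplus x y)) from by ac_rfl,
      star_oplus_self, one_oplus, star_one]
  have hw2 : w = star (oplus (odot x y) (star y)) := by rw [step1]
  have ha : oplus (odot x y) w = y := by
    rw [hw2]
    have h := lukasiewicz (odot x y) y
    have h2 : oplus y (star (odot x y)) = one := by
      rw [star_odot,
        show oplus y (oplus (star x) (star y)) = oplus (oplus y (star y)) (star x) from by ac_rfl,
        oplus_star_self, one_oplus]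
    rw [h2, star_one, oplus_zero] at h
    exact h
  have hb : odot (odot x y) w = zero := by
    show star (oplus (star (odot x y)) (star w)) = zero
    rw [hw2, star_star,
      show oplus (star (odot x y)) (oplus (odot x y) (star y)) =
        oplus (oplus (star (odot x y)) (odot x y)) (star y) from by ac_rfl,
      star_oplus_self, one_oplus, star_one]
  have e1 : s (oplus x y) = s x + s w := by rw [← hd]; exact hs.2.2 x w hc
  have e2 : s y = s (odot x y) + s w := by
    have h := hs.2.2 (odot x y) w hb
    rw [ha] at h
    exact h
  linarith

end States

-- iteration
def iter (d : A) : ℕ → A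
  | 0 => zero
  | n+1 => oplus (iter d n) d

lemma iter_add (d : A) (m n : ℕ) : iter d (m + n) = oplus (iter d m) (iter d n) := by
  induction n with
  | zero => simp [iter, oplus_zero]
  | succ n ih =>
      show iter d (m + n + 1) = _
      rw [show iter d (m+n+1) = oplus (iter d (m+n)) d from rfl, ih]
      show _ = oplus (iter d m) (oplus (iter d n) d)
      ac_rfl

lemma iter_le_succ (d : A) (n : ℕ) : mvle (iter d n) (iter d (n+1)) := mvle_oplus _ d

lemma iter_le_of_absorb {d z : A} (h : oplus z d = z) : ∀ n, mvle (iter d n) z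
  | 0 => mvle_zero z
  | (n+1) => by
      have := oplus_mono_left d (iter_le_of_absorb h n)
      rwa [h] at this

lemma iter_mono {d : A} {m n : ℕ} (h : m ≤ n) : mvle (iter d m) (iter d n) := by
  obtain ⟨k, rfl⟩ := Nat.exists_eq_add_of_le h
  rw [iter_add]; exact mvle_oplus _ _


lemma sup_aux {g : A → ℝ} (hbdd : ∀ a, g a ≤ 1)
    (hval : ∀ a, g (oplus a a) + g (odot a a) = g a + g a)
    (hzero : ∀ a, g (oplus a a) = 0 ∨ g (odot a a) = 0) : ∀ a, g a ≤ 0 := by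
  haveI : Nonempty A := ⟨zero⟩
  have hbdd' : BddAbove (Set.range g) := by
    refine ⟨1, ?_⟩; rintro _ ⟨a, rfl⟩; exact hbdd a
  have hσle : ∀ a, g a ≤ ⨆ b, g b := fun a => le_ciSup hbdd' a
  suffices hσ0 : (⨆ b, g b) ≤ 0 by
    intro a; exact (hσle a).trans hσ0
  by_contra hpos
  push_neg at hpos
  obtain ⟨a, ha⟩ : ∃ a, (⨆ b, g b) / 2 < g a := exists_lt_of_lt_ciSup (by linarith)
  rcases hzero a with h | h
  · have h4 := hσle (odot a a)
    linarith [hval a]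
  · have h4 := hσle (oplus a a)
    linarith [hval a]

/-- If `s` is a state-morphism (on doubles) and `s'` is a state vanishing where `s` does and
equal to 1 where `s` is, then `s' ≤ s`. -/
lemma diff_nonpos {s s' : A → ℝ} (hs : IsState s) (hs' : IsState s')
    (hm : ∀ a, s (oplus a a) = min (s a + s a) 1)
    (hv0 : ∀ a, s a = 0 → s' a = 0) (hv1 : ∀ a, s a = 1 → s' a = 1) :
    ∀ a, s' a - s a ≤ 0 := by
  refine sup_aux (g := fun a => s' a - s a) ?_ ?_ ?_
  · intro a
    have := s_le_one hs' a
    have := s_nonneg hs a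
    linarith
  · intro a
    have h1 := s_val hs a a
    have h2 := s_val hs' a a
    linarith
  · intro a
    rcases le_or_gt (s a + s a) 1 with h | h
    · right
      have h1 : s (oplus a a) = s a + s a := by rw [hm a, min_eq_left h]
      have h2 : s (odot a a) = 0 := by have := s_val hs a a; linarith
      simp only [h2, hv0 _ h2]; ring
    · left
      have h1 : s (oplus a a) = 1 := by rw [hm a, min_eq_right (by linarith)]
      simp only [h1, hv1 _ h1]; ring


/-- A state agreeing with a state-morphism `s` on its zero- and one-sets equals `s`. -/
lemma eq_of_vanish {s s' : A → ℝ} (hs : IsState s) (hs' : IsState s')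
    (hm : ∀ a, s (oplus a a) = min (s a + s a) 1)
    (hv0 : ∀ a, s a = 0 → s' a = 0) (hv1 : ∀ a, s a = 1 → s' a = 1) :
    ∀ a, s' a = s a := by
  have key : ∀ a : A, (s (oplus a a) = 1 ∧ s' (oplus a a) = 1) ∨
      (s (odot a a) = 0 ∧ s' (odot a a) = 0) := by
    intro a
    rcases le_or_gt (s a + s a) 1 with h | h
    · right
      have h1 : s (oplus a a) = s a + s a := by rw [hm a, min_eq_left h]
      have h2 : s (odot a a) = 0 := by have := s_val hs a a; linarith
      exact ⟨h2, hv0 _ h2⟩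
    · left
      have h1 : s (oplus a a) = 1 := by rw [hm a, min_eq_right (by linarith)]
      exact ⟨h1, hv1 _ h1⟩
  have g1 : ∀ a, s' a - s a ≤ 0 := by
    refine sup_aux (g := fun a => s' a - s a) ?_ ?_ ?_
    · intro a
      have := s_le_one hs' a
      have := s_nonneg hs a
      linarith
    · intro a
      have h1 := s_val hs a a
      have h2 := s_val hs' a a
      linarith
    · intro a
      rcases key a with ⟨h1, h2⟩ | ⟨h1, h2⟩
      · left; simp only [h1, h2]; ring
      · right; simp only [h1, h2]; ring
  have g2 : ∀ a, s a - s' a ≤ 0 := by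
    refine sup_aux (g := fun a => s a - s' a) ?_ ?_ ?_
    · intro a
      have := s_le_one hs a
      have := s_nonneg hs' a
      linarith
    · intro a
      have h1 := s_val hs a a
      have h2 := s_val hs' a a
      linarith
    · intro a
      rcases key a with ⟨h1, h2⟩ | ⟨h1, h2⟩
      · left; simp only [h1, h2]; ring
      · right; simp only [h1, h2]; ring
  intro a
  have := g1 a
  have := g2 a
  linarith

lemma morphism_of_extremal {s : A → ℝ} (hs : IsState s)
    (hext : IsExtremalState (A := A) s) :
    ∀ x y : A, s (oplus x y) = min (s x + s y) 1 := by
  intro x y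
  by_contra hne
  have hv := s_val hs x y
  -- basic consequences of failure
  have hkey : 0 < s (odot x y) ∧ s (oplus x y) < 1 := by
    rcases le_or_gt (s x + s y) 1 with h | h
    · rw [min_eq_left h] at hne
      have h0 : s (odot x y) ≠ 0 := fun h0 => hne (by linarith)
      have h1 : 0 < s (odot x y) := lt_of_le_of_ne (s_nonneg hs _) (Ne.symm h0)
      exact ⟨h1, by linarith⟩
    · rw [min_eq_right h.le] at hne
      have h2 : s (oplus x y) < 1 := lt_of_le_of_ne (s_le_one hs _) hne
      have h1 : 0 < s (odot x y) := by linarith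
      exact ⟨h1, h2⟩
  obtain ⟨hcpos, hult⟩ := hkey
  set c := odot x y with hc
  set u := oplus x y with hu
  set d := star u with hd
  -- absorption: (star c) ⊕ d = star c
  have habs : oplus (star c) d = star c := by
    have h := K (star x) (star y)
    rw [odot_star_star] at h
    rw [hd, hu, hc, star_odot]
    exact h
  have hdn_le : ∀ n, mvle (iter d n) (star c) := iter_le_of_absorb habs
  have hcdn : ∀ n, odot c (iter d n) = zero := by
    intro n
    refine mvle_zero_eq ?_
    have h1 := odot_mono_right c (hdn_le n)
    rwa [odot_star_self] at h1
  -- the sequences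
  set f : A → ℕ → ℝ := fun z n => s (odot z (iter d n)) with hf
  have fmono : ∀ z, Monotone (f z) := fun z =>
    monotone_nat_of_le_succ (fun n => s_mono hs (odot_mono_right z (iter_le_succ d n)))
  have fbdd : ∀ z, BddAbove (Set.range (f z)) := fun z =>
    ⟨1, by rintro _ ⟨n, rfl⟩; exact s_le_one hs _⟩
  set G : A → ℝ := fun z => ⨆ n, f z n with hG
  have htends : ∀ z, Tendsto (f z) atTop (nhds (G z)) := fun z =>
    tendsto_atTop_ciSup (fmono z) (fbdd z)
  have hfle : ∀ z n, f z n ≤ G z := fun z n => le_ciSup (fbdd z) n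
  have hfone : ∀ n, f one n = s (iter d n) := fun n => by
    simp only [hf, one_odot]
  -- basic bounds on G
  have hfz0 : ∀ z, f z 0 = 0 := fun z => by
    simp only [hf]
    show s (odot z zero) = 0
    rw [odot_zero, s_zero hs]
  have hG0 : ∀ z, 0 ≤ G z := fun z => by
    have := hfle z 0; rw [hfz0 z] at this; exact this
  have hGc : G c = 0 := by
    have : ∀ n, f c n = 0 := fun n => by
      simp only [hf, hcdn n, s_zero hs]
    simp only [hG, this, ciSup_const]
  have hGs : ∀ z, G z ≤ s z := fun z =>
    ciSup_le (fun n => s_mono hs (odot_le_left z (iter d n)))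
  have hGone_le : ∀ z, G z ≤ G one := fun z =>
    ciSup_le (fun n => le_trans (by
      rw [hfone n]
      exact s_mono hs (odot_le_right z (iter d n))) (hfle one n))
  have hsd : s d = 1 - s u := s_star hs u
  have hδpos : 0 < G one := by
    have h1 : f one 1 = s d := by
      rw [hfone 1]
      show s (oplus zero d) = s d
      rw [zero_oplus]
    have := hfle one 1
    rw [h1] at this
    linarith
  have hδlt : G one < 1 := by
    have hb : ∀ n, f one n ≤ 1 - s c := by
      intro n
      have h1 := hs.2.2 c (iter d n) (hcdn n)
      have h2 := s_le_one hs (oplus c (iter d n))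
      rw [hfone n]
      linarith
    have := ciSup_le hb
    linarith
  have hGlow : ∀ z, s z + G one - 1 ≤ G z := by
    intro z
    have hb : ∀ n, f one n ≤ G z + 1 - s z := by
      intro n
      have h1 := s_val hs z (iter d n)
      have h2 := s_le_one hs (oplus z (iter d n))
      have h3 := hfle z n
      rw [hfone n]
      simp only [hf] at h3
      linarith
    have := ciSup_le hb
    linarith
  -- additivity of G
  have t2n : Tendsto (fun n : ℕ => 2 * n) atTop atTop :=
    tendsto_atTop_atTop_of_monotone (fun a b h => by omega) (fun b => ⟨b, by omega⟩)
  have hadd : ∀ p q : A, odot p q = zero → G (oplus p q) = G p + G q := by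
    intro p q hpq
    have key : ∀ n, |f (oplus p q) n - (f p n + f q n)| ≤
        (s (oplus (oplus p q) (iter d (2 * n))) - s (oplus (oplus p q) (iter d n)))
        + (s (iter d (2 * n)) - s (iter d n)) := by
      intro n
      have he2 : oplus (iter d n) (iter d n) = iter d (2 * n) := by
        rw [two_mul, iter_add]
      have v1 := s_val hs (oplus p q) (iter d n)
      have v2 := s_val hs p (iter d n)
      have v3 := s_val hs q (iter d n)
      have v4 := s_val hs (oplus p (iter d n)) (oplus q (iter d n))
      have hre : oplus (oplus p (iter d n)) (oplus q (iter d n))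
          = oplus (oplus p q) (iter d (2 * n)) := by
        rw [← he2]; ac_rfl
      rw [hre] at v4
      have v5 := s_val hs (iter d n) (iter d n)
      rw [he2] at v5
      have hz : s (oplus p q) = s p + s q := hs.2.2 p q hpq
      have hup : s (odot (oplus p (iter d n)) (oplus q (iter d n))) ≤ s (iter d (2 * n)) := by
        have h := L6 p q (iter d n) (iter d n)
        rw [hpq, zero_oplus, he2] at h
        exact s_mono hs h
      have hlo : s (odot (iter d n) (iter d n))
          ≤ s (odot (oplus p (iter d n)) (oplus q (iter d n))) := by
        apply s_mono hs
        exact mvle_trans (odot_mono_left (iter d n) (mvle_oplus' p (iter d n)))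
          (odot_mono_right _ (mvle_oplus' q (iter d n)))
      have m1 : s (oplus (oplus p q) (iter d n)) ≤ s (oplus (oplus p q) (iter d (2 * n))) :=
        s_mono hs (oplus_mono_right _ (by rw [← he2]; exact mvle_oplus _ _))
      have m2 : s (iter d n) ≤ s (iter d (2 * n)) := by
        apply s_mono hs; rw [← he2]; exact mvle_oplus _ _
      rw [abs_le]
      constructor <;> simp only [hf] <;> linarith
    -- error tends to zero
    have tP : Tendsto (fun n => s (oplus (oplus p q) (iter d n))) atTop
        (nhds (⨆ n, s (oplus (oplus p q) (iter d n)))) := by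
      apply tendsto_atTop_ciSup
      · exact monotone_nat_of_le_succ
          (fun n => s_mono hs (oplus_mono_right _ (iter_le_succ d n)))
      · exact ⟨1, by rintro _ ⟨n, rfl⟩; exact s_le_one hs _⟩
    have tI : Tendsto (fun n => s (iter d n)) atTop (nhds (G one)) := by
      have : (fun n => s (iter d n)) = f one := funext fun n => (hfone n).symm
      rw [this]; exact htends one
    have tE : Tendsto (fun n =>
        (s (oplus (oplus p q) (iter d (2 * n))) - s (oplus (oplus p q) (iter d n)))
        + (s (iter d (2 * n)) - s (iter d n))) atTop (nhds 0) := by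
      have h1 := (tP.comp t2n).sub tP
      have h2 := (tI.comp t2n).sub tI
      have h3 := h1.add h2
      simp only [sub_self, add_zero] at h3
      exact h3
    have tdiff : Tendsto (fun n => f (oplus p q) n - (f p n + f q n)) atTop (nhds 0) :=
      squeeze_zero_norm key tE
    have tdiff' : Tendsto (fun n => f (oplus p q) n - (f p n + f q n)) atTop
        (nhds (G (oplus p q) - (G p + G q))) :=
      (htends (oplus p q)).sub ((htends p).add (htends q))
    have := tendsto_nhds_unique tdiff' tdiff
    linarith
  -- build the two states
  set l := G one with hl
  set s₁ : A → ℝ := fun a => G a / l with hs₁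
  set s₂ : A → ℝ := fun a => (s a - G a) / (1 - l) with hs₂
  have hl0 : l ≠ 0 := ne_of_gt hδpos
  have hl1 : (1 : ℝ) - l ≠ 0 := by intro h; rw [sub_eq_zero] at h; exact (ne_of_lt hδlt) h.symm
  have hstate1 : IsState s₁ := by
    refine ⟨fun a => ⟨?_, ?_⟩, ?_, ?_⟩
    · exact div_nonneg (hG0 a) (le_of_lt hδpos)
    · rw [div_le_one hδpos]; exact hGone_le a
    · simp only [hs₁]; rw [div_self hl0]
    · intro a b hab
      simp only [hs₁]
      rw [hadd a b hab]
      ring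
  have hstate2 : IsState s₂ := by
    have h1l : 0 < 1 - l := by linarith
    refine ⟨fun a => ⟨?_, ?_⟩, ?_, ?_⟩
    · exact div_nonneg (by linarith [hGs a]) (le_of_lt h1l)
    · rw [div_le_one h1l]
      have := hGlow a
      have := s_le_one hs a
      linarith
    · simp only [hs₂]
      rw [s_one hs]
      have : G (one : A) = l := rfl
      rw [this]
      rw [div_self hl1]
    · intro a b hab
      simp only [hs₂]
      rw [hadd a b hab, hs.2.2 a b hab]
      ring
  have hcombo : ∀ a, s a = l * s₁ a + (1 - l) * s₂ a := by
    intro a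
    simp only [hs₁, hs₂]
    field_simp
    ring
  have hres := (hext.2 s₁ s₂ hstate1 hstate2 l hδpos hδlt hcombo).1 c
  simp only [hs₁, hGc] at hres
  rw [zero_div] at hres
  exact (ne_of_lt hcpos) hres


end MValgebra

open MValgebra in
/-- A state on an MV-algebra is extremal iff it is a state-morphism,
i.e. `s(a ⊕ b) = min (s a + s b) 1` for all `a, b`. -/
theorem extremal_state_iff_state_morphism
    {A : Type*} [MValgebra A] (s : A → ℝ) (hs : IsState s) :
    IsExtremalState s ↔ ∀ a b : A, s (oplus a b) = min (s a + s b) 1 := by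
  constructor
  · intro hext
    intro a b
    exact morphism_of_extremal hs hext a b
  · intro hm
    refine ⟨hs, ?_⟩
    intro s₁ s₂ h1 h2 l hl0 hl1 hcombo
    have hl1' : 0 < 1 - l := by linarith
    have hv0 : ∀ a, s a = 0 → s₁ a = 0 ∧ s₂ a = 0 := by
      intro a ha
      have hc := hcombo a
      rw [ha] at hc
      have e1 : 0 ≤ l * s₁ a := mul_nonneg hl0.le (s_nonneg h1 a)
      have e2 : 0 ≤ (1 - l) * s₂ a := mul_nonneg hl1'.le (s_nonneg h2 a)
      have e3 : l * s₁ a = 0 := by linarith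
      have e4 : (1 - l) * s₂ a = 0 := by linarith
      constructor
      · rcases mul_eq_zero.1 e3 with h | h
        · exact absurd h (ne_of_gt hl0)
        · exact h
      · rcases mul_eq_zero.1 e4 with h | h
        · exact absurd h (ne_of_gt hl1')
        · exact h
    have hv1 : ∀ a, s a = 1 → s₁ a = 1 ∧ s₂ a = 1 := by
      intro a ha
      have hc := hcombo a
      rw [ha] at hc
      have e1 : s₁ a ≤ 1 := s_le_one h1 a
      have e2 : s₂ a ≤ 1 := s_le_one h2 a
      have e3 : l * s₁ a ≤ l * 1 := by nlinarith
      have e4 : (1 - l) * s₂ a ≤ (1 - l) * 1 := by nlinarith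
      constructor
      · by_contra hne
        have : s₁ a < 1 := lt_of_le_of_ne e1 hne
        nlinarith
      · by_contra hne
        have : s₂ a < 1 := lt_of_le_of_ne e2 hne
        nlinarith
    have hmd : ∀ a, s (oplus a a) = min (s a + s a) 1 := fun a => hm a a
    constructor
    · exact eq_of_vanish hs h1 hmd (fun a ha => (hv0 a ha).1) (fun a ha => (hv1 a ha).1)
    · exact eq_of_vanish hs h2 hmd (fun a ha => (hv0 a ha).2) (fun a ha => (hv1 a ha).2)
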